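/- Fix k ∈ ℕ with k ≥ 2, let V be a finite set, and let S be a (k+1)-uniform hypergraph on V. Then S satisfies condition (†) if and only if there exists a k-uniform hypergraph R on V such that S = K(R). -/
import Mathlib


variable {α : Type*} [DecidableEq α]

/-- `R` is a `k`-uniform hypergraph on the vertex set `V`. -/
def IsHypergraph (k : ℕ) (V : Finset α) (R : Set (Finset α)) : Prop :=
  ∀ e ∈ R, e ⊆ V ∧ e.card = k

/-- The Kay-graph of a `k`-uniform hypergraph `R` on `V`: the `(k+1)`-uniform hypergraph
on `V` whose hyperedges are the `(k+1)`-element subsets `A` of `V` such that the number of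
`k`-element subsets of `A` belonging to `R` is congruent to `k + 1` modulo `2`. -/
def kay (k : ℕ) (V : Finset α) (R : Set (Finset α)) : Set (Finset α) :=
  {A | A ⊆ V ∧ A.card = k + 1 ∧
    {e : Finset α | e ⊆ A ∧ e.card = k ∧ e ∈ R}.ncard % 2 = (k + 1) % 2}

/-- Condition (†) for a `(k+1)`-uniform hypergraph `S` on `V`: for every `(k+2)`-element
subset `W` of `V`, the number of `(k+1)`-element subsets of `W` belonging to `S` is
congruent to `k` modulo `2`. -/
def dagger (k : ℕ) (V : Finset α) (S : Set (Finset α)) : Prop :=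
  ∀ W : Finset α, W ⊆ V → W.card = k + 2 →
    {A : Finset α | A ⊆ W ∧ A.card = k + 1 ∧ A ∈ S}.ncard % 2 = k % 2

set_option linter.unusedSectionVars false
set_option linter.unreachableTactic false
set_option linter.unusedTactic false

attribute [local instance] Classical.propDecidable

lemma ncard_sub (W : Finset α) (m : ℕ) (p : Finset α → Prop) :
    {A : Finset α | A ⊆ W ∧ A.card = m ∧ p A}.ncard
      = ((W.powersetCard m).filter p).card := by
  rw [← Set.ncard_coe_finset]
  congr 1
  ext A
  simp [Finset.mem_powersetCard, and_assoc]

/-- the auxiliary cochain `t`. -/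
noncomputable def tfun (k : ℕ) (S : Set (Finset α)) (A : Finset α) : ℕ :=
  (k + if A ∈ S then 1 else 0) % 2

lemma tfun_lt (k : ℕ) (S : Set (Finset α)) (A : Finset α) : tfun k S A < 2 :=
  Nat.mod_lt _ two_pos

/-- the cone construction. -/
noncomputable def Rset (k : ℕ) (V : Finset α) (S : Set (Finset α)) (v : α) : Set (Finset α) :=
  {e | e ⊆ V ∧ e.card = k ∧ v ∉ e ∧ tfun k S (insert v e) = 1}

lemma key_lemma (k : ℕ) (V : Finset α) (S : Set (Finset α))
    (hd : dagger k V S) (v : α) (hv : v ∈ V) (A : Finset α)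
    (hAV : A ⊆ V) (hAc : A.card = k + 1) :
    ((A.powersetCard k).filter (· ∈ Rset k V S v)).card % 2 = tfun k S A := by
  by_cases hvA : v ∈ A
  · -- cone over a set containing the apex
    have herase : (A.erase v).card = k := by
      rw [Finset.card_erase_of_mem hvA, hAc]
      omega
    have hmem : ∀ e, (e ∈ (A.powersetCard k).filter (· ∈ Rset k V S v))
        ↔ (e = A.erase v ∧ tfun k S A = 1) := by
      intro e
      simp only [Finset.mem_filter, Finset.mem_powersetCard, Rset, Set.mem_setOf_eq]
      constructor
      · rintro ⟨⟨heA, hek⟩, -, -, hvn, hte⟩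
        have he' : e ⊆ A.erase v := fun x hx =>
          Finset.mem_erase.mpr ⟨fun h => hvn (h ▸ hx), heA hx⟩
        have heq : e = A.erase v :=
          Finset.eq_of_subset_of_card_le he' (by rw [herase, hek])
        subst heq
        rw [Finset.insert_erase hvA] at hte
        exact ⟨rfl, hte⟩
      · rintro ⟨rfl, htA⟩
        refine ⟨⟨Finset.erase_subset _ _, herase⟩, (Finset.erase_subset _ _).trans hAV,
          herase, Finset.notMem_erase _ _, ?_⟩
        rw [Finset.insert_erase hvA]; exact htA
    by_cases htA : tfun k S A = 1
    · have h1 : (A.powersetCard k).filter (· ∈ Rset k V S v) = {A.erase v} := by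
        ext e; rw [hmem, Finset.mem_singleton]; simp [htA]
      rw [h1, Finset.card_singleton, htA]
    · have h1 : (A.powersetCard k).filter (· ∈ Rset k V S v) = ∅ := by
        ext e; rw [hmem]; simp [htA]
      rw [h1, Finset.card_empty]
      have := tfun_lt k S A
      omega
  · -- apex not in A : use dagger on W = insert v A
    have hWV : insert v A ⊆ V := Finset.insert_subset hv hAV
    have hWc : (insert v A).card = k + 2 := by
      rw [Finset.card_insert_of_notMem hvA, hAc]
    have hdag := hd (insert v A) hWV hWc
    rw [ncard_sub] at hdag
    have hsplit : (insert v A).powersetCard (k+1)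
        = insert A ((A.powersetCard k).image (insert v)) := by
      ext B
      simp only [Finset.mem_powersetCard, Finset.mem_insert, Finset.mem_image]
      constructor
      · rintro ⟨hBW, hBc⟩
        by_cases hvB : v ∈ B
        · right
          refine ⟨B.erase v, ⟨?_, ?_⟩, Finset.insert_erase hvB⟩
          · intro x hx
            rw [Finset.mem_erase] at hx
            rcases Finset.mem_insert.mp (hBW hx.2) with h | h
            · exact absurd h hx.1
            · exact h
          · rw [Finset.card_erase_of_mem hvB, hBc]
            omega
        · have hBA : B ⊆ A := by
            intro x hx
            rcases Finset.mem_insert.mp (hBW hx) with h | h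
            · exact absurd (h ▸ hx) hvB
            · exact h
          exact Or.inl (Finset.eq_of_subset_of_card_le hBA (le_of_eq (hAc.trans hBc.symm)))
      · rintro (rfl | ⟨e, he, rfl⟩)
        · exact ⟨Finset.subset_insert _ _, hAc⟩
        · have hve : v ∉ e := fun h => hvA (he.1 h)
          exact ⟨Finset.insert_subset_insert _ he.1,
            by rw [Finset.card_insert_of_notMem hve, he.2]⟩
    have hAnotmem : A ∉ (A.powersetCard k).image (insert v) := by
      intro h
      obtain ⟨e, he, heq⟩ := Finset.mem_image.mp h
      exact hvA (heq ▸ Finset.mem_insert_self v e)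
    have hinj : ∀ x ∈ A.powersetCard k, ∀ y ∈ A.powersetCard k,
        insert v x = insert v y → x = y := by
      intro x hx y hy h
      rw [Finset.mem_powersetCard] at hx hy
      have hvx : v ∉ x := fun hc => hvA (hx.1 hc)
      have hvy : v ∉ y := fun hc => hvA (hy.1 hc)
      rw [← Finset.erase_insert hvx, ← Finset.erase_insert hvy, h]
    have hsum : ∑ B ∈ (insert v A).powersetCard (k+1), tfun k S B
        = tfun k S A + ∑ e ∈ A.powersetCard k, tfun k S (insert v e) := by
      rw [hsplit, Finset.sum_insert hAnotmem, Finset.sum_image hinj]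
    have hcards : ((insert v A).powersetCard (k+1)).card = k + 2 := by
      rw [Finset.card_powersetCard, hWc, Nat.choose_succ_self_right]
    have h0 : (∑ B ∈ (insert v A).powersetCard (k+1), tfun k S B) % 2
        = (∑ B ∈ (insert v A).powersetCard (k+1), (k + if B ∈ S then 1 else 0)) % 2 := by
      simp only [tfun]
      exact (Finset.sum_nat_mod _ 2 _).symm
    have h1 : ∑ B ∈ (insert v A).powersetCard (k+1), (k + if B ∈ S then 1 else 0)
        = (k + 2) * k + (((insert v A).powersetCard (k+1)).filter (· ∈ S)).card := by
      rw [Finset.sum_add_distrib, Finset.sum_const, smul_eq_mul, hcards, Finset.card_filter]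
    have hkk : ((k + 2) * k) % 2 = k % 2 := by
      rw [Nat.mul_mod, Nat.add_mod_right]
      rcases Nat.mod_two_eq_zero_or_one k with h | h <;> rw [h] <;> rfl
    have hdag' : (((insert v A).powersetCard (k+1)).filter (fun B => B ∈ S)).card % 2
        = k % 2 := hdag
    have hbig : (∑ B ∈ (insert v A).powersetCard (k+1), tfun k S B) % 2 = 0 := by
      rw [h0, h1]
      generalize hC : (k + 2) * k = C at hkk
      omega
    have hnr : ((A.powersetCard k).filter (· ∈ Rset k V S v)).card
        = ∑ e ∈ A.powersetCard k, tfun k S (insert v e) := by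
      rw [Finset.card_filter]
      refine Finset.sum_congr rfl fun e he => ?_
      rw [Finset.mem_powersetCard] at he
      have hve : v ∉ e := fun h => hvA (he.1 h)
      have hiff : (e ∈ Rset k V S v) ↔ tfun k S (insert v e) = 1 :=
        ⟨fun h => h.2.2.2, fun h => ⟨he.1.trans hAV, he.2, hve, h⟩⟩
      have hlt := tfun_lt k S (insert v e)
      by_cases h : e ∈ Rset k V S v
      · rw [if_pos h, (hiff.mp h).symm]
      · rw [if_neg h]
        have : tfun k S (insert v e) ≠ 1 := fun hc => h (hiff.mpr hc)
        omega
    rw [hnr]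
    rw [hsum] at hbig
    have := tfun_lt k S A
    omega

lemma card_mod (s : Finset (Finset α)) (f : Finset α → ℕ) (m : ℕ) :
    ((s.filter fun A => f A % 2 = m % 2).card) % 2
      = ((∑ A ∈ s, f A) + s.card * (m + 1)) % 2 := by
  have h1 : (s.filter fun A => f A % 2 = m % 2).card
      = ∑ A ∈ s, if f A % 2 = m % 2 then 1 else 0 := Finset.card_filter _ _
  have h2 : ∑ A ∈ s, (f A + (m + 1)) = (∑ A ∈ s, f A) + s.card * (m + 1) := by
    rw [Finset.sum_add_distrib, Finset.sum_const, smul_eq_mul]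
  rw [h1, ← h2, Finset.sum_nat_mod, Finset.sum_nat_mod (s := s) (f := fun A => f A + (m + 1))]
  congr 1
  refine Finset.sum_congr rfl fun A _ => ?_
  split_ifs with h <;> omega

lemma card_supersets (k : ℕ) (W e : Finset α) (hW : W.card = k + 2)
    (heW : e ⊆ W) (hek : e.card = k) :
    ((W.powersetCard (k+1)).filter fun A => e ⊆ A).card = 2 := by
  have himg : (W.powersetCard (k+1)).filter (fun A => e ⊆ A)
      = (W \ e).image (fun x => insert x e) := by
    ext A
    simp only [Finset.mem_filter, Finset.mem_powersetCard, Finset.mem_image, Finset.mem_sdiff]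
    constructor
    · rintro ⟨⟨hAW, hAc⟩, heA⟩
      have hcd : (A \ e).card = 1 := by rw [Finset.card_sdiff_of_subset heA]; omega
      obtain ⟨x, hx⟩ := Finset.card_eq_one.mp hcd
      have hxA : x ∈ A \ e := hx ▸ Finset.mem_singleton_self x
      rw [Finset.mem_sdiff] at hxA
      refine ⟨x, ⟨hAW hxA.1, hxA.2⟩, ?_⟩
      apply Finset.eq_of_subset_of_card_le (Finset.insert_subset hxA.1 heA)
      rw [Finset.card_insert_of_notMem hxA.2]; omega
    · rintro ⟨x, ⟨hxW, hxe⟩, rfl⟩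
      exact ⟨⟨Finset.insert_subset hxW heW,
        by rw [Finset.card_insert_of_notMem hxe, hek]⟩, Finset.subset_insert _ _⟩
  rw [himg, Finset.card_image_of_injOn, Finset.card_sdiff_of_subset heW, hW, hek]
  · omega
  · intro x hx y hy h
    simp only [Finset.mem_coe, Finset.mem_sdiff] at hx hy
    simp only at h
    have : x ∈ insert y e := h ▸ Finset.mem_insert_self x e
    rcases Finset.mem_insert.mp this with h' | h'
    · exact h'
    · exact absurd h' hx.2

lemma sum_counts (k : ℕ) (W : Finset α) (hW : W.card = k + 2) (R : Set (Finset α)) :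
    ∑ A ∈ W.powersetCard (k+1), ((A.powersetCard k).filter (· ∈ R)).card
      = 2 * ((W.powersetCard k).filter (· ∈ R)).card := by
  have h1 : ∀ A ∈ W.powersetCard (k+1),
      ((A.powersetCard k).filter (· ∈ R)).card
        = ∑ e ∈ (W.powersetCard k).filter (· ∈ R), if e ⊆ A then 1 else 0 := by
    intro A hA
    rw [Finset.mem_powersetCard] at hA
    rw [← Finset.card_filter]
    congr 1
    ext e
    simp only [Finset.mem_filter, Finset.mem_powersetCard]
    constructor
    · rintro ⟨⟨heA, hec⟩, heR⟩
      exact ⟨⟨⟨heA.trans hA.1, hec⟩, heR⟩, heA⟩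
    · rintro ⟨⟨⟨-, hec⟩, heR⟩, heA⟩
      exact ⟨⟨heA, hec⟩, heR⟩
  rw [Finset.sum_congr rfl h1, Finset.sum_comm]
  have h2 : ∀ e ∈ (W.powersetCard k).filter (· ∈ R),
      (∑ A ∈ W.powersetCard (k+1), if e ⊆ A then 1 else 0) = 2 := by
    intro e he
    rw [Finset.mem_filter, Finset.mem_powersetCard] at he
    rw [← Finset.card_filter]
    exact card_supersets k W e hW he.1.1 he.1.2
  rw [Finset.sum_congr rfl h2, Finset.sum_const, smul_eq_mul, mul_comm]

/-- A `(k+1)`-uniform hypergraph `S` on a finite set `V` satisfies condition (†) if and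
only if it is the Kay-graph of some `k`-uniform hypergraph `R` on `V`. -/
theorem dagger_iff_exists_kay (k : ℕ) (hk : 2 ≤ k) (V : Finset α) (S : Set (Finset α))
    (hS : IsHypergraph (k + 1) V S) :
    dagger k V S ↔ ∃ R : Set (Finset α), IsHypergraph k V R ∧ kay k V R = S := by
  constructor
  · intro hd
    rcases V.eq_empty_or_nonempty with rfl | ⟨v, hv⟩
    · refine ⟨∅, fun e he => absurd he (Set.notMem_empty e), ?_⟩
      have hSempty : S = ∅ := by
        ext A
        simp only [Set.mem_empty_iff_false, iff_false]
        intro hA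
        have h1 := (hS A hA).1
        have h2 := (hS A hA).2
        have := Finset.card_le_card h1
        simp only [Finset.card_empty] at this
        omega
      rw [hSempty]
      ext A
      simp only [kay, Set.mem_setOf_eq, Set.mem_empty_iff_false, iff_false]
      rintro ⟨hAV, hAc, -⟩
      have := Finset.card_le_card hAV
      simp only [Finset.card_empty] at this
      omega
    · refine ⟨Rset k V S v, fun e he => ⟨he.1, he.2.1⟩, ?_⟩
      ext A
      simp only [kay, Set.mem_setOf_eq]
      rw [ncard_sub A k (· ∈ Rset k V S v)]
      constructor
      · rintro ⟨hAV, hAc, hcond⟩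
        have hkey := key_lemma k V S hd v hv A hAV hAc
        by_cases hAS : A ∈ S
        · exact hAS
        · exfalso
          simp only [tfun, if_neg hAS, Nat.add_zero] at hkey
          omega
      · intro hAS
        obtain ⟨hAV, hAc⟩ := hS A hAS
        refine ⟨hAV, hAc, ?_⟩
        have hkey := key_lemma k V S hd v hv A hAV hAc
        simp only [tfun, if_pos hAS] at hkey
        exact hkey
  · rintro ⟨R, hR, rfl⟩
    intro W hWV hWc
    rw [ncard_sub]
    have hcongr : (W.powersetCard (k+1)).filter (· ∈ kay k V R)
        = (W.powersetCard (k+1)).filter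
            (fun A => ((A.powersetCard k).filter (· ∈ R)).card % 2 = (k + 1) % 2) := by
      apply Finset.filter_congr
      intro A hA
      rw [Finset.mem_powersetCard] at hA
      simp only [kay, Set.mem_setOf_eq, ncard_sub]
      constructor
      · rintro ⟨-, -, h⟩
        exact h
      · intro h
        exact ⟨hA.1.trans hWV, hA.2, h⟩
    rw [hcongr, card_mod, sum_counts k W hWc R, Finset.card_powersetCard, hWc,
      Nat.choose_succ_self_right]
    have hkk : ((k + 2) * (k + 1 + 1)) % 2 = k % 2 := by
      rw [Nat.mul_mod, Nat.add_mod_right]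
      rcases Nat.mod_two_eq_zero_or_one k with h | h <;> rw [h] <;> rfl
    generalize hC : (k + 2) * (k + 1 + 1) = C at hkk ⊢
    omega
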